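/- For integers m ≥ 0 and n, k ≥ 1, one has x₀^m ш (x₀^n x₁^k) = Σ_{m₁+m₂=m, m_i ≥ 0} C(m₁+n-1, n-1) · x₀^{m₁+n} 𝔅_{k+1}^{m₂}, an identity of multisets of words, where a binomial coefficient c multiplying a multiset means the multiset repeated c times. -/

import Mathlib

/-- The shuffle product of two words, as a multiset of words. -/
def shuffle {X : Type*} : List X → List X → Multiset (List X)
  | u, [] => {u}
  | [], v => {v}
  | a :: u, b :: v =>
      (shuffle u (b :: v)).map (a :: ·) + (shuffle (a :: u) v).map (b :: ·)
termination_by u v => u.length + v.length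

/-- The two-letter alphabet `X = {x₀, x₁}`. -/
def x0 : Bool := false
def x1 : Bool := true

/-- `𝔅_r^m`: the multiset of all words `x₀^{m₁} x₁ x₀^{m₂} x₁ ⋯ x₁ x₀^{m_r}`
with `m₁ + ⋯ + m_r = m`, `m_i ≥ 0`. -/
def B (r m : ℕ) : Multiset (List Bool) :=
  (Finset.Nat.antidiagonalTuple r m).val.map fun f =>
    List.intercalate [x1] (List.ofFn fun i => List.replicate (f i) x0)

/-- `S w T`: the multiset of all concatenations `u ++ w ++ v` with `u ∈ S`, `v ∈ T`,
counted with multiplicity. -/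
def msConcat {X : Type*} (S : Multiset (List X)) (w : List X) (T : Multiset (List X)) :
    Multiset (List X) :=
  S.bind fun u => T.map fun v => u ++ w ++ v

lemma shuffle_nil_left {X : Type*} (v : List X) : shuffle [] v = {v} := by
  cases v <;> simp [shuffle]

lemma shuffle_cons_cons {X : Type*} (a b : X) (u v : List X) :
    shuffle (a :: u) (b :: v) =
      (shuffle u (b :: v)).map (a :: ·) + (shuffle (a :: u) v).map (b :: ·) := by
  rw [shuffle]

-- the word function
def wd {r : ℕ} (f : Fin r → ℕ) : List Bool :=
  List.intercalate [x1] (List.ofFn fun i => List.replicate (f i) x0)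

lemma B_eq (r m : ℕ) : B r m = (Finset.Nat.antidiagonalTuple r m).val.map wd := rfl

example : (Finset.HasAntidiagonal.antidiagonal 3).val = ↑(List.Nat.antidiagonal 3) := rfl

lemma intercalate_cons {X : Type*} (s L : List X) (Ls : List (List X)) (h : Ls ≠ []) :
    List.intercalate s (L :: Ls) = L ++ s ++ List.intercalate s Ls := by
  cases Ls with
  | nil => simp at h
  | cons L' Ls' => simp [List.intercalate, List.intersperse]

lemma wd_cons {r : ℕ} (a : ℕ) (f : Fin (r + 1) → ℕ) :
    wd (Fin.cons a f) = List.replicate a x0 ++ x1 :: wd f := by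
  rw [wd, List.ofFn_succ]
  simp only [Fin.cons_zero, Fin.cons_succ]
  rw [intercalate_cons _ _ _ (by simp), wd]
  simp

lemma adt_succ_val (r m : ℕ) :
    (Finset.Nat.antidiagonalTuple (r + 1) m).val =
      (Finset.HasAntidiagonal.antidiagonal m).val.bind
        (fun p => (Finset.Nat.antidiagonalTuple r p.2).val.map (Fin.cons p.1)) := by
  show (List.Nat.antidiagonalTuple (r + 1) m : Multiset (Fin (r+1) → ℕ)) = _
  rw [List.Nat.antidiagonalTuple]
  rw [show (Finset.HasAntidiagonal.antidiagonal m).val = (↑(List.Nat.antidiagonal m) : Multiset _) from rfl]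
  rw [← Multiset.coe_bind]
  congr 1

lemma B_succ (r m : ℕ) :
    B (r + 2) m = (Finset.HasAntidiagonal.antidiagonal m).val.bind fun p =>
      (B (r + 1) p.2).map fun w => List.replicate p.1 x0 ++ x1 :: w := by
  rw [B_eq, adt_succ_val, Multiset.map_bind]
  congr 1
  funext p
  rw [B_eq, Multiset.map_map, Multiset.map_map]
  congr 1
  funext f
  exact wd_cons p.1 f

lemma B_one (m : ℕ) : B 1 m = {List.replicate m x0} := by
  rw [B_eq, Finset.Nat.antidiagonalTuple_one]
  show Multiset.map wd {![m]} = _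
  rw [Multiset.map_singleton]
  congr 1
  simp [wd, List.intercalate]

lemma B_zero (r : ℕ) : B (r + 1) 0 = {List.replicate r x1} := by
  induction r with
  | zero => rw [B_one]; rfl
  | succ r ih =>
      rw [B_succ, show (Finset.HasAntidiagonal.antidiagonal 0).val = ({(0,0)} : Multiset (ℕ × ℕ)) from rfl,
        Multiset.singleton_bind, ih]
      simp [List.replicate_succ]

lemma B_rec (r m : ℕ) :
    B (r + 2) (m + 1) = (B (r + 2) m).map (x0 :: ·) + (B (r + 1) (m + 1)).map (x1 :: ·) := by
  rw [B_succ, B_succ,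
    show (Finset.HasAntidiagonal.antidiagonal (m+1)).val
        = (0, m+1) ::ₘ (Finset.HasAntidiagonal.antidiagonal m).val.map (Prod.map Nat.succ id) from
      Multiset.Nat.antidiagonal_succ,
    Multiset.cons_bind, Multiset.bind_map, Multiset.map_bind]
  rw [add_comm]
  congr 1
  refine Multiset.bind_congr fun p _ => ?_
  rw [Multiset.map_map]
  refine Multiset.map_congr rfl fun w _ => ?_
  simp [List.replicate_succ]

lemma shuffle_x0_x1 (k m : ℕ) :
    shuffle (List.replicate m x0) (List.replicate k x1) = B (k + 1) m := by
  induction k generalizing m with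
  | zero => simp [shuffle, B_one]
  | succ k ihk =>
      induction m with
      | zero =>
          rw [show List.replicate 0 x0 = ([] : List Bool) from rfl, shuffle_nil_left, B_zero]
      | succ m ihm =>
          rw [List.replicate_succ (a := x0), List.replicate_succ (a := x1), shuffle_cons_cons,
            ← List.replicate_succ (a := x0), ← List.replicate_succ (a := x1), ihm, ihk (m+1), B_rec]

lemma map_cons_rep (t : ℕ) (M : Multiset (List Bool)) :
    Multiset.map (x0 :: ·) (M.map (fun w => List.replicate t x0 ++ w))
      = M.map (fun w => List.replicate (t + 1) x0 ++ w) := by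
  rw [Multiset.map_map]
  refine Multiset.map_congr rfl fun w _ => ?_
  simp [List.replicate_succ]

lemma map_x0_sum (m : ℕ) (g : ℕ × ℕ → Multiset (List Bool)) :
    Multiset.map (x0 :: ·) (∑ p ∈ Finset.HasAntidiagonal.antidiagonal m, g p)
      = ∑ p ∈ Finset.HasAntidiagonal.antidiagonal m, Multiset.map (x0 :: ·) (g p) :=
  map_sum (Multiset.mapAddMonoidHom (x0 :: ·)) _ _

lemma shuffle_step (k s m : ℕ) :
    shuffle (List.replicate (m + 1) x0) (List.replicate (s + 1) x0 ++ List.replicate k x1)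
      = (shuffle (List.replicate m x0)
          (List.replicate (s + 1) x0 ++ List.replicate k x1)).map (x0 :: ·)
        + (shuffle (List.replicate (m + 1) x0)
            (List.replicate s x0 ++ List.replicate k x1)).map (x0 :: ·) :=
  shuffle_cons_cons x0 x0 (List.replicate m x0) (List.replicate s x0 ++ List.replicate k x1)

lemma aux (k s m : ℕ) :
    shuffle (List.replicate m x0) (List.replicate (s + 1) x0 ++ List.replicate k x1) =
      ∑ p ∈ Finset.HasAntidiagonal.antidiagonal m,
        Nat.choose (p.1 + s) s •
          (B (k + 1) p.2).map (fun w => List.replicate (p.1 + s + 1) x0 ++ w) := by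
  induction m generalizing s with
  | zero =>
      rw [show List.replicate 0 x0 = ([] : List Bool) from rfl, shuffle_nil_left,
        show Finset.HasAntidiagonal.antidiagonal 0 = {((0 : ℕ), (0 : ℕ))} from rfl, Finset.sum_singleton,
        B_zero k]
      simp
  | succ m ihm =>
      induction s with
      | zero =>
          rw [shuffle_step k 0 m,
            show (List.replicate 0 x0 ++ List.replicate k x1) = List.replicate k x1 from rfl,
            shuffle_x0_x1, ihm 0, Finset.Nat.sum_antidiagonal_succ, map_x0_sum]
          rw [add_comm]
          congr 1
          · refine Finset.sum_congr rfl fun p _ => ?_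
            simp only [Nat.choose_zero_right, one_smul, Nat.add_zero]
            rw [map_cons_rep]
      | succ s ihs =>
          rw [shuffle_step k (s + 1) m, ihm (s + 1), ihs, Finset.Nat.sum_antidiagonal_succ,
            Finset.Nat.sum_antidiagonal_succ (f := fun p => Nat.choose (p.1 + (s+1)) (s+1) •
              (B (k + 1) p.2).map (fun w => List.replicate (p.1 + (s+1) + 1) x0 ++ w)),
            map_x0_sum]
          simp only [Multiset.map_add, map_x0_sum, Multiset.map_nsmul, map_cons_rep,
            Nat.choose_self, one_smul]
          rw [add_left_comm]
          congr 1
          · simp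
          · rw [← Finset.sum_add_distrib]
            refine Finset.sum_congr rfl fun p _ => ?_
            rw [show p.1 + 1 + s + 1 + 1 = p.1 + (s + 1) + 1 + 1 by ring,
              show p.1 + 1 + (s + 1) + 1 = p.1 + (s + 1) + 1 + 1 by ring,
              ← add_nsmul]
            congr 1
            rw [show p.1 + 1 + s = p.1 + (s + 1) by ring,
              show p.1 + 1 + (s + 1) = (p.1 + (s + 1)) + 1 by ring,
              Nat.choose_succ_succ, add_comm]


theorem shuffle_x0_pow_x0_pow_x1_pow (m n k : ℕ) (hn : 1 ≤ n) (hk : 1 ≤ k) :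
    shuffle (List.replicate m x0) (List.replicate n x0 ++ List.replicate k x1) =
      ∑ p ∈ Finset.HasAntidiagonal.antidiagonal m,
        Nat.choose (p.1 + n - 1) (n - 1) •
          (B (k + 1) p.2).map (fun w => List.replicate (p.1 + n) x0 ++ w) := by
  obtain ⟨s, rfl⟩ : ∃ s, n = s + 1 := ⟨n - 1, by omega⟩
  rw [aux k s m]
  refine Finset.sum_congr rfl fun p _ => ?_
  rw [show p.1 + (s + 1) - 1 = p.1 + s by omega, show s + 1 - 1 = s by omega,
    show p.1 + (s + 1) = p.1 + s + 1 by ring]
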